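/- On ℝ² with vector fields X₁ = e^{-1/y²}∂_x (extended by 0 at y=0) and X₂ = e^{-1/x²}∂_y (extended by 0 at x=0), the degeneration locus (where the Hörmander condition fails) is Z₀ = {x=0} ∪ {y=0}, the characteristic set of Z₀ is Z₁ = {(0,0)}, and char(Z₁) = Z₁, so the chain of iterated characteristic sets stabilizes at the origin. -/

import Mathlib

noncomputable def lieB {V : Type*} [NormedAddCommGroup V] [NormedSpace ℝ V] (X Y : V → V) : V → V :=
  fun p => fderiv ℝ Y p (X p) - fderiv ℝ X p (Y p)

noncomputable def iterBracket {V : Type*} [NormedAddCommGroup V] [NormedSpace ℝ V] {r : ℕ}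
    (X : Fin r → V → V) : List (Fin r) → V → V
  | [] => fun _ => 0
  | [i] => X i
  | i :: l => lieB (X i) (iterBracket X l)

noncomputable def hormanderSpan {V : Type*} [NormedAddCommGroup V] [NormedSpace ℝ V] {r : ℕ}
    (X : Fin r → V → V) (p : V) : Submodule ℝ V :=
  Submodule.span ℝ {v | ∃ l : List (Fin r), l ≠ [] ∧ iterBracket X l p = v}

def ZariskiTangent {V : Type*} [NormedAddCommGroup V] [NormedSpace ℝ V]
    (A : Set V) (p v : V) : Prop :=
  ∀ f : V → ℝ, ContDiff ℝ 1 f → (∀ x ∈ A, f x = 0) → fderiv ℝ f p v = 0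

def charSet {V : Type*} [NormedAddCommGroup V] [NormedSpace ℝ V] {r : ℕ}
    (X : Fin r → V → V) (A : Set V) : Set V :=
  {p ∈ A | ∀ j, ZariskiTangent A p (X j p)}

/-- The flat function `t ↦ e^{-1/t²}`, extended by `0` at `t = 0`. -/
noncomputable def flatExp (t : ℝ) : ℝ := if t = 0 then 0 else Real.exp (-(1 / t ^ 2))

open Real

/- ## Auxiliary lemmas -/

lemma flatExp_eq_comp : flatExp = expNegInvGlue ∘ (fun t : ℝ => t ^ 2) := by
  funext t
  by_cases h : t = 0
  · simp [flatExp, h, expNegInvGlue.zero_of_nonpos le_rfl]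
  · have h2 : (0:ℝ) < t ^ 2 := by positivity
    simp only [flatExp, if_neg h, Function.comp_apply, expNegInvGlue, if_neg (not_le.2 h2),
      one_div]

lemma flatExp_contDiff : ContDiff ℝ (⊤ : ℕ∞) flatExp := by
  rw [flatExp_eq_comp]
  exact expNegInvGlue.contDiff.comp (contDiff_id.pow 2)

lemma flatExp_zero : flatExp 0 = 0 := if_pos rfl

lemma flatExp_ne_zero {t : ℝ} (h : t ≠ 0) : flatExp t ≠ 0 := by
  simp only [flatExp, if_neg h]
  exact Real.exp_ne_zero _

lemma expNegInvGlue_flat (n : ℕ) : iteratedFDeriv ℝ n expNegInvGlue 0 = 0 := by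
  have hcont : Continuous (iteratedFDeriv ℝ n expNegInvGlue) :=
    (expNegInvGlue.contDiff (n := (⊤:ℕ∞))).continuous_iteratedFDeriv (by exact_mod_cast le_top)
  have hzero : Set.EqOn (iteratedFDeriv ℝ n expNegInvGlue) 0 (Set.Iio 0) := by
    intro x hx
    have hev : expNegInvGlue =ᶠ[nhds x] (fun _ => 0) := by
      filter_upwards [Iio_mem_nhds hx] with y hy
      exact expNegInvGlue.zero_of_nonpos (le_of_lt hy)
    calc iteratedFDeriv ℝ n expNegInvGlue x
        = iteratedFDerivWithin ℝ n expNegInvGlue Set.univ x := (congrFun iteratedFDerivWithin_univ x).symm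
      _ = iteratedFDerivWithin ℝ n (fun _ => (0:ℝ)) Set.univ x := by
          apply Filter.EventuallyEq.iteratedFDerivWithin_eq
          · rw [nhdsWithin_univ]; exact hev
          · exact expNegInvGlue.zero_of_nonpos (le_of_lt hx)
      _ = iteratedFDeriv ℝ n (fun _ => (0:ℝ)) x := congrFun iteratedFDerivWithin_univ x
      _ = 0 := by rw [iteratedFDeriv_zero_fun]; rfl
  have := hzero.closure hcont continuous_const
  rw [closure_Iio] at this
  have h0 := this (Set.self_mem_Iic (a := (0:ℝ)))
  simpa using h0

lemma flatExp_flat (n : ℕ) : iteratedFDeriv ℝ n flatExp 0 = 0 := by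
  rw [flatExp_eq_comp]
  set sq : ℝ → ℝ := fun t : ℝ => t ^ 2 with hsq
  have hsqc : ContDiff ℝ (⊤ : ℕ∞) sq := contDiff_id.pow 2
  set D : ℝ := 1 + ∑ i ∈ Finset.range (n + 1), ‖iteratedFDeriv ℝ i sq 0‖ with hD
  have hDsum : (0:ℝ) ≤ ∑ i ∈ Finset.range (n + 1), ‖iteratedFDeriv ℝ i sq 0‖ :=
    Finset.sum_nonneg fun i _ => norm_nonneg _
  have hD1 : (1:ℝ) ≤ D := by simp [hD]; linarith
  have key : ‖iteratedFDeriv ℝ n (expNegInvGlue ∘ sq) 0‖ ≤ (n.factorial : ℝ) * 0 * D ^ n := by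
    apply norm_iteratedFDeriv_comp_le (N := ((⊤ : ℕ∞) : WithTop ℕ∞))
      expNegInvGlue.contDiff hsqc (by exact_mod_cast le_top) 0
    · intro i _
      have h0 : sq 0 = 0 := by simp [hsq]
      rw [h0, expNegInvGlue_flat i, norm_zero]
    · intro i hi1 hin
      calc ‖iteratedFDeriv ℝ i sq 0‖
          ≤ ∑ j ∈ Finset.range (n + 1), ‖iteratedFDeriv ℝ j sq 0‖ :=
            Finset.single_le_sum (f := fun j => ‖iteratedFDeriv ℝ j sq 0‖)
              (fun j _ => norm_nonneg _) (Finset.mem_range.2 (Nat.lt_succ_of_le hin))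
        _ ≤ D := by simp [hD]
        _ ≤ D ^ i := le_self_pow₀ hD1 (Nat.one_le_iff_ne_zero.mp hi1)
  rw [mul_zero, zero_mul] at key
  exact norm_le_zero_iff.mp key

abbrev WW := ℝ × ℝ

/-- all iterated derivatives vanish at `p` -/
def FlatAt {F : Type*} [NormedAddCommGroup F] [NormedSpace ℝ F] (f : WW → F) (p : WW) : Prop :=
  ∀ n : ℕ, iteratedFDeriv ℝ n f p = 0

lemma flatAt_congr {F : Type*} [NormedAddCommGroup F] [NormedSpace ℝ F] {f g : WW → F} {p : WW}
    (h : f = g) (hf : FlatAt f p) : FlatAt g p := h ▸ hf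

lemma flatAt_zero {F : Type*} [NormedAddCommGroup F] [NormedSpace ℝ F] (p : WW) :
    FlatAt (fun _ => (0 : F)) p := fun n => by
  rw [iteratedFDeriv_zero_fun]; rfl

/-- composing a flat one-variable function with a coordinate projection -/
lemma flatAt_comp_clm (L : WW →L[ℝ] ℝ) (p : WW) (hp : L p = 0) :
    FlatAt (fun q => flatExp (L q)) p := by
  intro n
  have : (fun q => flatExp (L q)) = flatExp ∘ L := rfl
  rw [this, L.iteratedFDeriv_comp_right (flatExp_contDiff.of_le (by exact_mod_cast le_top)) p le_rfl]
  rw [hp, flatExp_flat n]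
  ext m
  simp

lemma FlatAt.fderivR {F : Type*} [NormedAddCommGroup F] [NormedSpace ℝ F] {f : WW → F} {p : WW}
    (hf : FlatAt f p) : FlatAt (fderiv ℝ f) p := by
  intro n
  rw [← norm_eq_zero, norm_iteratedFDeriv_fderiv, hf (n + 1), norm_zero]

lemma FlatAt.sub {F : Type*} [NormedAddCommGroup F] [NormedSpace ℝ F] {f g : WW → F} {p : WW}
    (hfc : ContDiff ℝ (⊤:ℕ∞) f) (hgc : ContDiff ℝ (⊤:ℕ∞) g)
    (hf : FlatAt f p) (hg : FlatAt g p) : FlatAt (fun q => f q - g q) p := by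
  intro n
  have h : (fun q => f q - g q) = (f + (-g)) := by funext q; simp [sub_eq_add_neg]
  rw [h, iteratedFDeriv_add_apply (show ContDiff ℝ (n:ℕ∞) f from hfc.of_le (by exact_mod_cast le_top)).contDiffAt
    (show ContDiff ℝ (n:ℕ∞) (-g) from (hgc.of_le (by exact_mod_cast le_top)).neg).contDiffAt,
    iteratedFDeriv_neg_apply, hf n, hg n]
  simp

/-- pairing of a flat clm-valued function with a smooth function is flat -/
lemma FlatAt.clm_apply {F G : Type*} [NormedAddCommGroup F] [NormedSpace ℝ F]
    [NormedAddCommGroup G] [NormedSpace ℝ G]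
    {f : WW → F →L[ℝ] G} {g : WW → F} {p : WW}
    (hfc : ContDiff ℝ (⊤:ℕ∞) f) (hgc : ContDiff ℝ (⊤:ℕ∞) g) (hf : FlatAt f p) :
    FlatAt (fun q => f q (g q)) p := by
  intro n
  rw [← norm_eq_zero]
  refine le_antisymm ?_ (norm_nonneg _)
  have h := norm_iteratedFDeriv_clm_apply (N := ((⊤:ℕ∞) : WithTop ℕ∞)) hfc hgc p
    (n := n) (by exact_mod_cast le_top)
  refine h.trans (le_of_eq (Finset.sum_eq_zero fun i _ => ?_))
  rw [hf i, norm_zero, mul_zero, zero_mul]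

def Good (Y : WW → WW) : Prop :=
  ContDiff ℝ (⊤:ℕ∞) Y ∧
  (∀ p : WW, p.1 = 0 → FlatAt (fun q => (Y q).2) p) ∧
  (∀ p : WW, p.2 = 0 → FlatAt (fun q => (Y q).1) p)

lemma goodAux (L : WW →L[ℝ] ℝ) {X Y : WW → WW}
    (hXc : ContDiff ℝ (⊤:ℕ∞) X) (hYc : ContDiff ℝ (⊤:ℕ∞) Y) {p : WW}
    (hX : FlatAt (fun q => L (X q)) p) (hY : FlatAt (fun q => L (Y q)) p) :
    FlatAt (fun q => L (lieB X Y q)) p := by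
  have hYd : Differentiable ℝ Y := hYc.differentiable (by simp)
  have hXd : Differentiable ℝ X := hXc.differentiable (by simp)
  have cLY : ContDiff ℝ (⊤:ℕ∞) (fun z => L (Y z)) := L.contDiff.comp hYc
  have cLX : ContDiff ℝ (⊤:ℕ∞) (fun z => L (X z)) := L.contDiff.comp hXc
  have cdLY : ContDiff ℝ (⊤:ℕ∞) (fderiv ℝ (fun z => L (Y z))) :=
    cLY.fderiv_right (by exact_mod_cast le_top)
  have cdLX : ContDiff ℝ (⊤:ℕ∞) (fderiv ℝ (fun z => L (X z))) :=
    cLX.fderiv_right (by exact_mod_cast le_top)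
  have heq : (fun q => L (lieB X Y q)) =
      fun q => (fderiv ℝ (fun z => L (Y z)) q) (X q) - (fderiv ℝ (fun z => L (X z)) q) (Y q) := by
    funext q
    have e1 : fderiv ℝ (fun z => L (Y z)) q = L.comp (fderiv ℝ Y q) :=
      (L.hasFDerivAt.comp q (hYd q).hasFDerivAt).fderiv
    have e2 : fderiv ℝ (fun z => L (X z)) q = L.comp (fderiv ℝ X q) :=
      (L.hasFDerivAt.comp q (hXd q).hasFDerivAt).fderiv
    simp only [lieB, map_sub, e1, e2, ContinuousLinearMap.comp_apply]
  rw [heq]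
  exact FlatAt.sub (cdLY.clm_apply hXc) (cdLX.clm_apply hYc)
    (hY.fderivR.clm_apply cdLY hXc) (hX.fderivR.clm_apply cdLX hYc)

lemma Good.lieBG {X Y : WW → WW} (hX : Good X) (hY : Good Y) : Good (lieB X Y) := by
  obtain ⟨hXc, hX2, hX1⟩ := hX
  obtain ⟨hYc, hY2, hY1⟩ := hY
  have hfdY : ContDiff ℝ (⊤:ℕ∞) (fderiv ℝ Y) := hYc.fderiv_right (by exact_mod_cast le_top)
  have hfdX : ContDiff ℝ (⊤:ℕ∞) (fderiv ℝ X) := hXc.fderiv_right (by exact_mod_cast le_top)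
  refine ⟨(hfdY.clm_apply hXc).sub (hfdX.clm_apply hYc), ?_, ?_⟩
  · intro p hp
    exact goodAux (ContinuousLinearMap.snd ℝ ℝ ℝ) hXc hYc (hX2 p hp) (hY2 p hp)
  · intro p hp
    exact goodAux (ContinuousLinearMap.fst ℝ ℝ ℝ) hXc hYc (hX1 p hp) (hY1 p hp)

lemma FlatAt.value {f : WW → ℝ} {p : WW} (h : FlatAt f p) : f p = 0 := by
  calc f p = iteratedFDeriv ℝ 0 f p (fun _ => 0) := (iteratedFDeriv_zero_apply _).symm
    _ = 0 := by rw [h 0]; rfl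

lemma good_iterBracket (X : Fin 2 → WW → WW) (hG : ∀ i, Good (X i)) :
    ∀ l : List (Fin 2), l ≠ [] → Good (iterBracket X l) := by
  intro l
  induction l with
  | nil => intro h; exact absurd rfl h
  | cons i t ih =>
    intro _
    cases t with
    | nil => exact hG i
    | cons j t' =>
      exact Good.lieBG (hG i) (ih (by simp))

theorem iterated_char_of_two_flat_fields
    (X : Fin 2 → ℝ × ℝ → ℝ × ℝ)
    (hX0 : X 0 = fun p => (flatExp p.2, (0 : ℝ)))
    (hX1 : X 1 = fun p => ((0 : ℝ), flatExp p.1)) :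
    {p : ℝ × ℝ | hormanderSpan X p ≠ ⊤} = {p : ℝ × ℝ | p.1 = 0 ∨ p.2 = 0} ∧
    charSet X {p : ℝ × ℝ | p.1 = 0 ∨ p.2 = 0} = {(0, 0)} ∧
    charSet X {((0 : ℝ), (0 : ℝ))} = {(0, 0)} := by
  have hXzero : ∀ j : Fin 2, X j ((0:ℝ), (0:ℝ)) = 0 := by
    rw [Fin.forall_fin_two]
    constructor
    · rw [hX0]; show (flatExp 0, (0:ℝ)) = 0; rw [flatExp_zero]; rfl
    · rw [hX1]; show ((0:ℝ), flatExp 0) = 0; rw [flatExp_zero]; rfl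
  have hGood : ∀ i : Fin 2, Good (X i) := by
    rw [Fin.forall_fin_two]
    constructor
    · rw [hX0]
      refine ⟨(flatExp_contDiff.comp contDiff_snd).prodMk contDiff_const, ?_, ?_⟩
      · intro p _
        exact flatAt_zero p
      · intro p hp
        exact flatAt_comp_clm (ContinuousLinearMap.snd ℝ ℝ ℝ) p hp
    · rw [hX1]
      refine ⟨contDiff_const.prodMk (flatExp_contDiff.comp contDiff_fst), ?_, ?_⟩
      · intro p hp
        exact flatAt_comp_clm (ContinuousLinearMap.fst ℝ ℝ ℝ) p hp
      · intro p _
        exact flatAt_zero p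
  -- the derivative of (x, y) ↦ x * y
  have hfd : ∀ p v : ℝ × ℝ, fderiv ℝ (fun q : ℝ × ℝ => q.1 * q.2) p v = p.1 * v.2 + p.2 * v.1 := by
    intro p v
    have h : HasFDerivAt (fun q : ℝ × ℝ => q.1 * q.2)
        (p.1 • ContinuousLinearMap.snd ℝ ℝ ℝ + p.2 • ContinuousLinearMap.fst ℝ ℝ ℝ) p :=
      hasFDerivAt_fst.mul hasFDerivAt_snd
    rw [h.fderiv]
    simp [smul_eq_mul]
  have hmul_cd : ContDiff ℝ 1 (fun q : ℝ × ℝ => q.1 * q.2) := contDiff_fst.mul contDiff_snd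
  have hmul_van : ∀ x ∈ {p : ℝ × ℝ | p.1 = 0 ∨ p.2 = 0}, (fun q : ℝ × ℝ => q.1 * q.2) x = 0 := by
    rintro x (h | h) <;> simp [h]
  refine ⟨?_, ?_, ?_⟩
  · -- degeneration locus
    ext p
    simp only [Set.mem_setOf_eq]
    constructor
    · intro h
      by_contra hc
      push_neg at hc
      obtain ⟨h1, h2⟩ := hc
      apply h
      rw [Submodule.eq_top_iff']
      intro w
      have m0 : X 0 p ∈ hormanderSpan X p :=
        Submodule.subset_span ⟨[0], by simp, rfl⟩
      have m1 : X 1 p ∈ hormanderSpan X p :=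
        Submodule.subset_span ⟨[1], by simp, rfl⟩
      have hw : w = (w.1 / flatExp p.2) • X 0 p + (w.2 / flatExp p.1) • X 1 p := by
        rw [hX0, hX1]
        have e1 : flatExp p.2 ≠ 0 := flatExp_ne_zero h2
        have e2 : flatExp p.1 ≠ 0 := flatExp_ne_zero h1
        apply Prod.ext <;> simp [div_mul_cancel₀, e1, e2]
      rw [hw]
      exact Submodule.add_mem _ (Submodule.smul_mem _ _ m0) (Submodule.smul_mem _ _ m1)
    · intro h htop
      rcases h with hp | hp
      · have hle : hormanderSpan X p ≤ LinearMap.ker (LinearMap.snd ℝ ℝ ℝ) := by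
          rw [hormanderSpan, Submodule.span_le]
          rintro v ⟨l, hl, rfl⟩
          exact ((good_iterBracket X hGood l hl).2.1 p hp).value
        rw [htop] at hle
        have h01 : ((0:ℝ), (1:ℝ)) ∈ LinearMap.ker (LinearMap.snd ℝ ℝ ℝ) :=
          hle Submodule.mem_top
        simpa using h01
      · have hle : hormanderSpan X p ≤ LinearMap.ker (LinearMap.fst ℝ ℝ ℝ) := by
          rw [hormanderSpan, Submodule.span_le]
          rintro v ⟨l, hl, rfl⟩
          exact ((good_iterBracket X hGood l hl).2.2 p hp).value
        rw [htop] at hle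
        have h10 : ((1:ℝ), (0:ℝ)) ∈ LinearMap.ker (LinearMap.fst ℝ ℝ ℝ) :=
          hle Submodule.mem_top
        simpa using h10
  · -- charSet of the cross
    ext p
    constructor
    · rintro ⟨_, htan⟩
      have h2 : p.2 = 0 := by
        have h0 := htan 0 _ hmul_cd hmul_van
        rw [hX0] at h0
        rw [hfd] at h0
        simp only [mul_zero, zero_add] at h0
        by_contra hne
        exact (mul_ne_zero hne (flatExp_ne_zero hne)) h0
      have h1 : p.1 = 0 := by
        have h0 := htan 1 _ hmul_cd hmul_van
        rw [hX1] at h0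
        rw [hfd] at h0
        simp only [mul_zero, add_zero] at h0
        by_contra hne
        exact (mul_ne_zero hne (flatExp_ne_zero hne)) h0
      show p = ((0:ℝ), (0:ℝ))
      exact Prod.ext h1 h2
    · intro hp
      rw [Set.mem_singleton_iff] at hp
      subst hp
      refine ⟨Or.inl rfl, ?_⟩
      intro j f hf hv
      rw [hXzero j]
      exact (fderiv ℝ f _).map_zero
  · -- charSet of the origin
    ext p
    constructor
    · rintro ⟨hp, _⟩
      exact hp
    · intro hp
      rw [Set.mem_singleton_iff] at hp
      subst hp
      refine ⟨rfl, ?_⟩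
      intro j f hf hv
      rw [hXzero j]
      exact (fderiv ℝ f _).map_zero
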